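/- arXiv:1903.10964 — 2 statements merged into one kernel-verified Lean document; each statement's English description precedes it below -/
import Mathlib

section
/- Let z ~ N(0, σ²) be a Gaussian random variable and φ(z) = max(-ζ, min(z, ζ)) the saturation function with level ζ > 0. Then E[z·φ(z)] = σ²·erf(ζ/(√2·σ)). -/
open MeasureTheory ProbabilityTheory

/-- The Gauss error function. -/
noncomputable def erf (x : ℝ) : ℝ := (2 / Real.sqrt Real.pi) * ∫ t in (0:ℝ)..x, Real.exp (-t ^ 2)

/-- The symmetric saturation function at level ζ. -/
noncomputable def sat (ζ x : ℝ) : ℝ := max (-ζ) (min x ζ)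

open Set Filter

lemma sat_continuous (ζ : ℝ) : Continuous (sat ζ) :=
  continuous_const.max (continuous_id.min continuous_const)

lemma sat_abs_le (ζ x : ℝ) (hζ : 0 < ζ) : |sat ζ x| ≤ ζ := by
  rw [abs_le]
  exact ⟨le_max_left _ _, max_le (by linarith) (min_le_right _ _)⟩

lemma sat_eq_self {ζ x : ℝ} (h1 : -ζ ≤ x) (h2 : x ≤ ζ) : sat ζ x = x := by
  rw [sat, min_eq_left h2, max_eq_right h1]

lemma hasDerivAt_exp_negsq (b x : ℝ) :
    HasDerivAt (fun y => Real.exp (-b * y ^ 2)) (-(2*b) * (x * Real.exp (-b * x ^ 2))) x := by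
  have h1 : HasDerivAt (fun y : ℝ => -b * y ^ 2) (-b * (2 * x)) x := by
    simpa using ((hasDerivAt_pow 2 x).const_mul (-b))
  have := h1.exp
  convert this using 1
  ring

lemma tendsto_exp_negsq_atTop {b : ℝ} (hb : 0 < b) :
    Tendsto (fun x => Real.exp (-b * x ^ 2)) atTop (nhds 0) := by
  apply Real.tendsto_exp_atBot.comp
  have h2 : Tendsto (fun x : ℝ => x ^ 2) atTop atTop := tendsto_pow_atTop two_ne_zero
  exact h2.const_mul_atTop_of_neg (by linarith)

lemma tendsto_exp_negsq_atBot {b : ℝ} (hb : 0 < b) :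
    Tendsto (fun x => Real.exp (-b * x ^ 2)) atBot (nhds 0) := by
  have h := (tendsto_exp_negsq_atTop hb).comp tendsto_neg_atBot_atTop
  simpa only [Function.comp_def, neg_sq] using h

/-- Integrability of `x * sat ζ x * exp (-b x²)`. -/
lemma integrable_sat_mul {b ζ : ℝ} (hb : 0 < b) (hζ : 0 < ζ) :
    Integrable (fun x => x * sat ζ x * Real.exp (-b * x ^ 2)) := by
  have hg : Integrable (fun x => ζ * (x * Real.exp (-b * x ^ 2))) :=
    (integrable_mul_exp_neg_mul_sq hb).const_mul ζ
  refine hg.mono ?_ ?_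
  · exact (((continuous_id.mul (sat_continuous ζ)).mul
      (Real.continuous_exp.comp (by continuity))).aestronglyMeasurable)
  · refine Filter.Eventually.of_forall fun x => ?_
    have h1 : |sat ζ x| ≤ ζ := sat_abs_le ζ x hζ
    have h2 : (0:ℝ) < Real.exp (-b * x ^ 2) := Real.exp_pos _
    simp only [Real.norm_eq_abs, abs_mul, Real.abs_exp]
    calc |x| * |sat ζ x| * Real.exp (-b * x ^ 2)
        ≤ |x| * ζ * Real.exp (-b * x ^ 2) := by gcongr
      _ = |ζ| * (|x| * Real.exp (-b * x ^ 2)) := by rw [abs_of_pos hζ]; ring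

/-- The key computation over ℝ. -/
lemma key_integral {b ζ : ℝ} (hb : 0 < b) (hζ : 0 < ζ) :
    ∫ x, x * sat ζ x * Real.exp (-b * x ^ 2)
      = (1 / (2 * b)) * ∫ x in (-ζ)..ζ, Real.exp (-b * x ^ 2) := by
  have hb' : b ≠ 0 := ne_of_gt hb
  set E : ℝ → ℝ := fun x => Real.exp (-b * x ^ 2) with hE
  set h : ℝ → ℝ := fun x => x * sat ζ x * E x with hh
  have hint : Integrable h := integrable_sat_mul hb hζ
  have hxE : Integrable (fun x => x * E x) := integrable_mul_exp_neg_mul_sq hb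
  have hEcont : Continuous E := Real.continuous_exp.comp (by continuity)
  -- Tail on Ioi ζ
  have tail_top : ∫ x in Ioi ζ, h x = ζ / (2 * b) * E ζ := by
    have hcongr : ∫ x in Ioi ζ, h x = ∫ x in Ioi ζ, ζ * (x * E x) := by
      refine setIntegral_congr_fun measurableSet_Ioi fun x hx => ?_
      have hx' : ζ < x := hx
      have hs : sat ζ x = ζ := by
        rw [sat, min_eq_right hx'.le, max_eq_right (by linarith)]
      rw [hh]; simp only [hs]; ring
    rw [hcongr]
    have hderiv : ∀ x ∈ Ioi ζ, HasDerivAt (fun y => -(ζ / (2*b)) * E y) (ζ * (x * E x)) x := by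
      intro x _
      have hd := (hasDerivAt_exp_negsq b x).const_mul (-(ζ / (2*b)))
      have heq : -(ζ / (2*b)) * (-(2*b) * (x * E x)) = ζ * (x * E x) := by
        field_simp <;> ring
      exact heq ▸ hd
    have htend : Tendsto (fun y => -(ζ / (2*b)) * E y) atTop (nhds 0) := by
      simpa [hE, neg_mul] using (tendsto_exp_negsq_atTop hb).const_mul (-(ζ / (2*b)))
    have := integral_Ioi_of_hasDerivAt_of_tendsto
      (Continuous.continuousWithinAt (by fun_prop))
      hderiv ((hxE.const_mul ζ).integrableOn) htend
    rw [this]; ring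
  -- Tail on Iic (-ζ)
  have tail_bot : ∫ x in Iic (-ζ), h x = ζ / (2 * b) * E ζ := by
    have hcongr : ∫ x in Iic (-ζ), h x = ∫ x in Iic (-ζ), -ζ * (x * E x) := by
      refine setIntegral_congr_fun measurableSet_Iic fun x hx => ?_
      have hx' : x ≤ -ζ := hx
      have hs : sat ζ x = -ζ := by
        rw [sat, min_eq_left (by linarith), max_eq_left hx']
      rw [hh]; simp only [hs]; ring
    rw [hcongr]
    have hderiv : ∀ x ∈ Iio (-ζ), HasDerivAt (fun y => (ζ / (2*b)) * E y) (-ζ * (x * E x)) x := by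
      intro x _
      have hd := (hasDerivAt_exp_negsq b x).const_mul (ζ / (2*b))
      have heq : (ζ / (2*b)) * (-(2*b) * (x * E x)) = -ζ * (x * E x) := by
        field_simp <;> ring
      exact heq ▸ hd
    have htend : Tendsto (fun y => (ζ / (2*b)) * E y) atBot (nhds 0) := by
      simpa [hE] using (tendsto_exp_negsq_atBot hb).const_mul ((ζ / (2*b)))
    have := integral_Iic_of_hasDerivAt_of_tendsto
      (Continuous.continuousWithinAt (by fun_prop))
      hderiv ((hxE.const_mul (-ζ)).integrableOn) htend
    rw [this]
    have : E (-ζ) = E ζ := by simp [hE]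
    rw [this]; ring
  -- Middle
  have middle : ∫ x in Ioc (-ζ) ζ, h x
      = -(ζ / b) * E ζ + (1 / (2*b)) * ∫ x in (-ζ)..ζ, E x := by
    have h1 : ∫ x in Ioc (-ζ) ζ, h x = ∫ x in (-ζ)..ζ, h x := by
      rw [intervalIntegral.integral_of_le (by linarith)]
    have h2 : ∫ x in (-ζ)..ζ, h x = ∫ x in (-ζ)..ζ, x * (x * E x) := by
      refine intervalIntegral.integral_congr fun x hx => ?_
      rw [uIcc_of_le (by linarith)] at hx
      simp only [hh, sat_eq_self hx.1 hx.2]; ring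
    have hu : ∀ x ∈ uIcc (-ζ) ζ, HasDerivAt (fun y : ℝ => y) (1:ℝ) x := fun x _ => hasDerivAt_id x
    have hv : ∀ x ∈ uIcc (-ζ) ζ, HasDerivAt (fun y => -(1/(2*b)) * E y) (x * E x) x := by
      intro x _
      have hd := (hasDerivAt_exp_negsq b x).const_mul (-(1 / (2*b)))
      have heq : -(1/(2*b)) * (-(2*b) * (x * E x)) = x * E x := by field_simp <;> ring
      exact heq ▸ hd
    have hparts := intervalIntegral.integral_mul_deriv_eq_deriv_mul hu hv
      (intervalIntegrable_const)
      ((continuous_id.mul hEcont).intervalIntegrable _ _)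
    rw [h1, h2, hparts]
    have hEneg : E (-ζ) = E ζ := by simp [hE]
    have : ∫ x in (-ζ)..ζ, (1:ℝ) * (-(1/(2*b)) * E x) = -(1/(2*b)) * ∫ x in (-ζ)..ζ, E x := by
      simp [intervalIntegral.integral_const_mul]
    rw [this, hEneg]
    field_simp
    ring
  -- Combine
  have split1 : ∫ x in Iic ζ, h x = (∫ x in Iic (-ζ), h x) + ∫ x in Ioc (-ζ) ζ, h x := by
    rw [← setIntegral_union (Iic_disjoint_Ioc le_rfl) measurableSet_Ioc
      hint.integrableOn hint.integrableOn, Iic_union_Ioc_eq_Iic (by linarith)]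
  have split2 : (∫ x in Iic ζ, h x) + ∫ x in Ioi ζ, h x = ∫ x, h x :=
    intervalIntegral.integral_Iic_add_Ioi hint.integrableOn hint.integrableOn
  have : ∫ x, h x = (∫ x in Iic (-ζ), h x) + (∫ x in Ioc (-ζ) ζ, h x) + ∫ x in Ioi ζ, h x := by
    rw [← split2, split1]
  rw [this, tail_top, tail_bot, middle]
  ring

lemma integral_exp_negsq_symm (a : ℝ) :
    ∫ t in (-a)..a, Real.exp (-t ^ 2) = 2 * ∫ t in (0:ℝ)..a, Real.exp (-t ^ 2) := by
  have hi1 : IntervalIntegrable (fun t : ℝ => Real.exp (-t ^ 2)) volume (-a) 0 :=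
    Continuous.intervalIntegrable (by continuity) _ _
  have hi2 : IntervalIntegrable (fun t : ℝ => Real.exp (-t ^ 2)) volume 0 a :=
    Continuous.intervalIntegrable (by continuity) _ _
  rw [← intervalIntegral.integral_add_adjacent_intervals hi1 hi2]
  have hneg : ∫ t in (-a)..(0:ℝ), Real.exp (-t ^ 2) = ∫ t in (0:ℝ)..a, Real.exp (-t ^ 2) := by
    have h := intervalIntegral.integral_comp_neg (a := (0:ℝ)) (b := a)
      (fun t : ℝ => Real.exp (-t ^ 2))
    simp only [neg_sq, neg_zero] at h
    rw [h]
  rw [hneg]; ring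

lemma gauss_interval_sub {s ζ : ℝ} (hs : 0 < s) :
    ∫ x in (-ζ)..ζ, Real.exp (-s ^ 2 * x ^ 2)
      = s⁻¹ * (2 * ∫ t in (0:ℝ)..(s * ζ), Real.exp (-t ^ 2)) := by
  have h := intervalIntegral.integral_comp_mul_left (a := -ζ) (b := ζ)
    (fun t : ℝ => Real.exp (-t ^ 2)) hs.ne'
  simp only [mul_pow, neg_mul, mul_neg] at h ⊢
  rw [h, smul_eq_mul]
  congr 1
  have := integral_exp_negsq_symm (s * ζ)
  rw [this]

theorem expectation_mul_sat_gaussian (σ : ℝ) (hσ : 0 < σ) (ζ : ℝ) (hζ : 0 < ζ) :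
    ∫ x, x * sat ζ x ∂(gaussianReal 0 ⟨σ ^ 2, sq_nonneg σ⟩)
      = σ ^ 2 * erf (ζ / (Real.sqrt 2 * σ)) := by
  set v : NNReal := ⟨σ ^ 2, sq_nonneg σ⟩ with hv
  have hv0 : v ≠ 0 := by
    intro h
    have : (v : ℝ) = 0 := by rw [h]; simp
    rw [hv] at this
    change σ ^ 2 = 0 at this
    nlinarith
  have hvcoe : (v : ℝ) = σ ^ 2 := rfl
  rw [gaussianReal_of_var_ne_zero _ hv0]
  have hpdf : (gaussianPDF 0 v) = fun x => (((fun x => (gaussianPDFReal 0 v x).toNNReal) x : NNReal) : ENNReal) := rfl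
  rw [hpdf, integral_withDensity_eq_integral_smul
    ((measurable_gaussianPDFReal 0 v).real_toNNReal) (fun x => x * sat ζ x)]
  set b : ℝ := (2 * σ ^ 2)⁻¹ with hb
  have hbpos : 0 < b := by positivity
  set c : ℝ := (Real.sqrt (2 * Real.pi * σ ^ 2))⁻¹ with hc
  have hstep : ∀ x : ℝ, (gaussianPDFReal 0 v x).toNNReal • (x * sat ζ x)
      = c * (x * sat ζ x * Real.exp (-b * x ^ 2)) := by
    intro x
    rw [NNReal.smul_def, Real.coe_toNNReal _ (gaussianPDFReal_nonneg 0 v x)]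
    rw [gaussianPDFReal, hvcoe]
    have harg : -(x - 0) ^ 2 / (2 * σ ^ 2) = -b * x ^ 2 := by
      rw [hb]; field_simp; ring
    rw [harg, hc, smul_eq_mul]
    ring
  simp_rw [hstep]
  rw [MeasureTheory.integral_const_mul, key_integral hbpos hζ]
  set s : ℝ := (Real.sqrt 2 * σ)⁻¹ with hs
  have hspos : 0 < s := by
    rw [hs]; positivity
  have hs2 : s ^ 2 = b := by
    rw [hs, hb, inv_pow, mul_pow, Real.sq_sqrt (by norm_num : (0:ℝ) ≤ 2)]
  have hJ : ∫ x in (-ζ)..ζ, Real.exp (-b * x ^ 2)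
      = s⁻¹ * (2 * ∫ t in (0:ℝ)..(s * ζ), Real.exp (-t ^ 2)) := by
    rw [← hs2]; exact gauss_interval_sub hspos
  rw [hJ]
  have harg2 : s * ζ = ζ / (Real.sqrt 2 * σ) := by
    rw [hs]; field_simp
  rw [harg2, erf]
  have hsqrt : Real.sqrt (2 * Real.pi * σ ^ 2)
      = Real.sqrt 2 * Real.sqrt Real.pi * σ := by
    rw [Real.sqrt_mul (by positivity), Real.sqrt_mul (by norm_num : (0:ℝ) ≤ 2),
      Real.sqrt_sq hσ.le]
  have hπ : 0 < Real.sqrt Real.pi := Real.sqrt_pos.mpr Real.pi_pos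
  have h2 : 0 < Real.sqrt 2 := by positivity
  rw [hc, hsqrt, hs, hb]
  field_simp
end

section
/- Let z ~ N(0, σ²) be a Gaussian random variable and φ(z) = max(-ζ, min(z, ζ)) with ζ > 0. Then E[φ(z)²] = ζ² + (σ² - ζ²)·erf(ζ/(√2·σ)) - (2ζσ/√(2π))·e^{-ζ²/(2σ²)}. -/
open MeasureTheory ProbabilityTheory

lemma erf_symm_integral (a : ℝ) :
    ∫ x in (-a)..a, Real.exp (-x ^ 2) = Real.sqrt Real.pi * erf a := by
  have hcont : Continuous fun x : ℝ => Real.exp (-x ^ 2) := by continuity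
  have h1 : ∫ x in (-a)..(0:ℝ), Real.exp (-x ^ 2) = ∫ x in (0:ℝ)..a, Real.exp (-x ^ 2) := by
    have := intervalIntegral.integral_comp_neg (a := (0:ℝ)) (b := a)
      (fun x : ℝ => Real.exp (-x ^ 2))
    simp only [neg_neg, neg_zero, neg_sq] at this ⊢
    rw [← this]
  have h2 : (∫ x in (-a)..(0:ℝ), Real.exp (-x ^ 2)) + ∫ x in (0:ℝ)..a, Real.exp (-x ^ 2)
      = ∫ x in (-a)..a, Real.exp (-x ^ 2) :=
    intervalIntegral.integral_add_adjacent_intervals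
      (hcont.intervalIntegrable _ _) (hcont.intervalIntegrable _ _)
  have hπ : Real.sqrt Real.pi ≠ 0 := by positivity
  rw [← h2, h1, erf]
  field_simp
  ring

lemma ibp_integral (σ ζ : ℝ) (hσ : 0 < σ) :
    ∫ x in (-ζ)..ζ, Real.exp (-x ^ 2 / (2 * σ ^ 2)) * (x ^ 2 - σ ^ 2)
      = -2 * σ ^ 2 * ζ * Real.exp (-ζ ^ 2 / (2 * σ ^ 2)) := by
  have hσ2 : (2 : ℝ) * σ ^ 2 ≠ 0 := by positivity
  have hderiv : ∀ x ∈ Set.uIcc (-ζ) ζ,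
      HasDerivAt (fun x => -σ ^ 2 * x * Real.exp (-x ^ 2 / (2 * σ ^ 2)))
        (Real.exp (-x ^ 2 / (2 * σ ^ 2)) * (x ^ 2 - σ ^ 2)) x := by
    intro x _
    have h1 : HasDerivAt (fun x : ℝ => -x ^ 2 / (2 * σ ^ 2))
        (-(2 * x) / (2 * σ ^ 2)) x := by
      have := ((hasDerivAt_pow 2 x).neg).div_const (2 * σ ^ 2)
      simpa using this
    have hexp := h1.exp
    have h2 : HasDerivAt (fun x : ℝ => -σ ^ 2 * x) (-σ ^ 2) x := by
      simpa using (hasDerivAt_id x).const_mul (-σ ^ 2)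
    have : HasDerivAt (fun x => -σ ^ 2 * x * Real.exp (-x ^ 2 / (2 * σ ^ 2))) _ x :=
      h2.mul hexp
    convert this using 1
    field_simp
    ring
  have hint : IntervalIntegrable
      (fun x => Real.exp (-x ^ 2 / (2 * σ ^ 2)) * (x ^ 2 - σ ^ 2)) volume (-ζ) ζ := by
    apply Continuous.intervalIntegrable
    continuity
  rw [intervalIntegral.integral_eq_sub_of_hasDerivAt hderiv hint]
  ring_nf

lemma gauss_window_integral (σ ζ : ℝ) (hσ : 0 < σ) :
    ∫ x in (-ζ)..ζ, Real.exp (-x ^ 2 / (2 * σ ^ 2))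
      = Real.sqrt 2 * σ * (Real.sqrt Real.pi * erf (ζ / (Real.sqrt 2 * σ))) := by
  have hc : Real.sqrt 2 * σ ≠ 0 := by positivity
  have key : ∀ x : ℝ, Real.exp (-x ^ 2 / (2 * σ ^ 2))
      = (fun t => Real.exp (-t ^ 2)) (x / (Real.sqrt 2 * σ)) := by
    intro x
    simp only
    congr 1
    rw [div_pow, mul_pow, Real.sq_sqrt (by norm_num : (0:ℝ) ≤ 2)]
    field_simp
  rw [intervalIntegral.integral_congr (fun x _ => key x),
    intervalIntegral.integral_comp_div (fun t => Real.exp (-t ^ 2)) hc]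
  rw [smul_eq_mul, neg_div]
  rw [erf_symm_integral]

theorem expectation_sat_sq_gaussian (σ : ℝ) (hσ : 0 < σ) (ζ : ℝ) (hζ : 0 < ζ) :
    ∫ x, (sat ζ x) ^ 2 ∂(gaussianReal 0 ⟨σ ^ 2, sq_nonneg σ⟩)
      = ζ ^ 2 + (σ ^ 2 - ζ ^ 2) * erf (ζ / (Real.sqrt 2 * σ))
        - (2 * ζ * σ / Real.sqrt (2 * Real.pi)) * Real.exp (-ζ ^ 2 / (2 * σ ^ 2)) := by
  set v : NNReal := ⟨σ ^ 2, sq_nonneg σ⟩ with hv_def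
  have hv : v ≠ 0 := by
    intro h
    have : (v : ℝ) = 0 := by rw [h]; simp
    rw [hv_def] at this
    change σ ^ 2 = 0 at this
    nlinarith
  have hvcoe : (v : ℝ) = σ ^ 2 := rfl
  -- Step 1: integral over withDensity
  have hmeas : Measurable (fun x => (gaussianPDFReal 0 v x).toNNReal) :=
    (measurable_gaussianPDFReal 0 v).real_toNNReal
  have h0 : ∫ x, (sat ζ x) ^ 2 ∂(gaussianReal 0 v)
      = ∫ x, gaussianPDFReal 0 v x * (sat ζ x) ^ 2 := by
    rw [gaussianReal_of_var_ne_zero 0 hv]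
    have hpdf : gaussianPDF 0 v
        = fun x => ((fun x => (gaussianPDFReal 0 v x).toNNReal) x : ENNReal) := rfl
    rw [hpdf, integral_withDensity_eq_integral_smul hmeas]
    congr 1
    ext x
    rw [NNReal.smul_def, Real.coe_toNNReal _ (gaussianPDFReal_nonneg 0 v x), smul_eq_mul]
  rw [h0]
  set f := gaussianPDFReal 0 v with hf_def
  have hfint : Integrable f := integrable_gaussianPDFReal 0 v
  have hsatcont : Continuous (sat ζ) :=
    continuous_const.max (continuous_id.min continuous_const)
  have hsat_mem : ∀ x, -ζ ≤ sat ζ x ∧ sat ζ x ≤ ζ := by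
    intro x
    refine ⟨le_max_left _ _, max_le (by linarith) (min_le_right _ _)⟩
  have hbound : ∀ x, ‖(sat ζ x) ^ 2 - ζ ^ 2‖ ≤ ζ ^ 2 := by
    intro x
    obtain ⟨h1, h2⟩ := hsat_mem x
    have hsq : (sat ζ x) ^ 2 ≤ ζ ^ 2 := sq_le_sq' h1 h2
    have hsq0 : 0 ≤ (sat ζ x) ^ 2 := sq_nonneg _
    rw [Real.norm_eq_abs, abs_of_nonpos (by linarith)]
    linarith
  have hhint : Integrable (fun x => ((sat ζ x) ^ 2 - ζ ^ 2) * f x) :=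
    hfint.bdd_mul ((hsatcont.pow 2).sub continuous_const).aestronglyMeasurable
      (Filter.Eventually.of_forall hbound)
  have hpt : ∀ x, f x * (sat ζ x) ^ 2
      = ζ ^ 2 * f x + ((sat ζ x) ^ 2 - ζ ^ 2) * f x := by intro x; ring
  rw [integral_congr_ae (Filter.Eventually.of_forall hpt),
    integral_add (hfint.const_mul _) hhint, integral_const_mul,
    integral_gaussianPDFReal_eq_one 0 hv, mul_one]
  -- compute ∫ h over Ioc (-ζ) ζ
  have hvanish : ∀ x ∉ Set.Ioc (-ζ) ζ, ((sat ζ x) ^ 2 - ζ ^ 2) * f x = 0 := by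
    intro x hx
    rw [Set.mem_Ioc, not_and_or] at hx
    have hsat : (sat ζ x) ^ 2 = ζ ^ 2 := by
      rcases hx with hx | hx
      · push_neg at hx
        have hxle : x ≤ -ζ := hx
        have : sat ζ x = -ζ := by
          rw [sat, min_eq_left (by linarith), max_eq_left hxle]
        rw [this, neg_sq]
      · push_neg at hx
        have : sat ζ x = ζ := by
          rw [sat, min_eq_right (le_of_lt hx), max_eq_right (by linarith)]
        rw [this]
    rw [hsat]
    ring
  rw [← setIntegral_eq_integral_of_forall_compl_eq_zero hvanish]
  have hcongr : Set.EqOn (fun x => ((sat ζ x) ^ 2 - ζ ^ 2) * f x)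
      (fun x => (x ^ 2 - ζ ^ 2) * f x) (Set.Ioc (-ζ) ζ) := by
    intro x hx
    simp only
    congr 2
    rw [sat, min_eq_left hx.2, max_eq_right (le_of_lt hx.1)]
  rw [setIntegral_congr_fun measurableSet_Ioc hcongr,
    ← intervalIntegral.integral_of_le (by linarith : -ζ ≤ ζ)]
  -- expand f and compute
  have hfx : ∀ x, f x = (Real.sqrt (2 * Real.pi * σ ^ 2))⁻¹
      * Real.exp (-x ^ 2 / (2 * σ ^ 2)) := by
    intro x
    rw [hf_def, gaussianPDFReal]
    rw [hvcoe]
    ring_nf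
  set c : ℝ := (Real.sqrt (2 * Real.pi * σ ^ 2))⁻¹ with hc_def
  have hptint : ∀ x, (x ^ 2 - ζ ^ 2) * f x
      = c * (Real.exp (-x ^ 2 / (2 * σ ^ 2)) * (x ^ 2 - σ ^ 2)
          + (σ ^ 2 - ζ ^ 2) * Real.exp (-x ^ 2 / (2 * σ ^ 2))) := by
    intro x
    rw [hfx x]
    ring
  have hce : Continuous fun x : ℝ => Real.exp (-x ^ 2 / (2 * σ ^ 2)) :=
    (((continuous_pow 2).neg).div_const _).rexp
  have hcq : Continuous fun x : ℝ => x ^ 2 - σ ^ 2 :=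
    (continuous_pow 2).sub continuous_const
  rw [intervalIntegral.integral_congr (fun x _ => hptint x),
    intervalIntegral.integral_const_mul,
    intervalIntegral.integral_add (f := fun x => Real.exp (-x ^ 2 / (2 * σ ^ 2)) * (x ^ 2 - σ ^ 2))
      ((hce.mul hcq).intervalIntegrable _ _)
      ((hce.intervalIntegrable _ _).const_mul _),
    intervalIntegral.integral_const_mul,
    ibp_integral σ ζ hσ, gauss_window_integral σ ζ hσ]
  -- algebra
  have h2π : Real.sqrt (2 * Real.pi) = Real.sqrt 2 * Real.sqrt Real.pi :=
    Real.sqrt_mul (by norm_num) _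
  have hs : Real.sqrt (2 * Real.pi * σ ^ 2) = Real.sqrt 2 * Real.sqrt Real.pi * σ := by
    rw [Real.sqrt_mul (by positivity), Real.sqrt_sq hσ.le, h2π]
  have h2pos : (0:ℝ) < Real.sqrt 2 := by positivity
  have hπpos : (0:ℝ) < Real.sqrt Real.pi := Real.sqrt_pos.mpr Real.pi_pos
  rw [hc_def, hs, h2π]
  field_simp
  ring
end
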